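/- Let Θ = (θ_1,…,θ_N) ∈ ℝ^{Nm} with θ_k ∈ ℝ^m, and let λ_0,…,λ_N ∈ ℝ^n be defined by λ_N = 0 and λ_{k−1} = Aᵀλ_k + Cᵀθ_k for k = 1,…,N. Then Σ_{k=0}^{N−1} λ_kᵀ B Q⁻¹ Bᵀ λ_k = Θᵀ F Q_inv Fᵀ Θ. -/
import Mathlib


open Matrix

/-- The block lower-triangular matrix `F` whose `(k, i)` block is `C A^{k−1−i} B`. -/
def Fmat {n l m : ℕ} (N : ℕ) (A : Matrix (Fin n) (Fin n) ℝ) (B : Matrix (Fin n) (Fin l) ℝ)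
    (C : Matrix (Fin m) (Fin n) ℝ) : Matrix (Fin N × Fin m) (Fin N × Fin l) ℝ :=
  fun p q => if (q.1 : ℕ) ≤ (p.1 : ℕ) then (C * A ^ ((p.1 : ℕ) - (q.1 : ℕ)) * B) p.2 q.2 else 0

/-- Block-diagonal matrix with `N` diagonal blocks `Q⁻¹`. -/
noncomputable def Qinv {l : ℕ} (N : ℕ) (Q : Matrix (Fin l) (Fin l) ℝ) :
    Matrix (Fin N × Fin l) (Fin N × Fin l) ℝ :=
  fun p q => if p.1 = q.1 then Q⁻¹ p.2 q.2 else 0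

lemma mulVec_sum' {p n N : ℕ} (A : Matrix (Fin p) (Fin n) ℝ) (f : Fin N → Fin n → ℝ) :
    A *ᵥ (∑ k, f k) = ∑ k, A *ᵥ f k := by
  apply map_sum A.mulVecLin

lemma lam_formula {n m N : ℕ} (A : Matrix (Fin n) (Fin n) ℝ) (C : Matrix (Fin m) (Fin n) ℝ)
    (Θ : Fin N × Fin m → ℝ) (lam : ℕ → Fin n → ℝ)
    (hlamN : lam N = 0)
    (hlam : ∀ k : Fin N, lam (k : ℕ) = Aᵀ *ᵥ lam ((k : ℕ) + 1) + Cᵀ *ᵥ (fun r => Θ (k, r))) :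
    ∀ d i, i + d = N →
      lam i = ∑ k : Fin N, if i ≤ (k : ℕ) then
        (Aᵀ ^ ((k : ℕ) - i)) *ᵥ (Cᵀ *ᵥ fun r => Θ (k, r)) else 0 := by
  intro d
  induction d with
  | zero =>
    intro i hi
    have : i = N := by omega
    subst this
    rw [hlamN]
    symm
    apply Finset.sum_eq_zero
    intro k _
    rw [if_neg (by omega)]
  | succ d ih =>
    intro i hi
    have hiN : i < N := by omega
    have hrec := hlam ⟨i, hiN⟩
    simp only [Fin.val_mk] at hrec
    rw [hrec, ih (i + 1) (by omega)]
    have key : ∀ k : Fin N,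
        (if i ≤ (k : ℕ) then (Aᵀ ^ ((k : ℕ) - i)) *ᵥ (Cᵀ *ᵥ fun r => Θ (k, r)) else 0)
        = Aᵀ *ᵥ (if i + 1 ≤ (k : ℕ) then (Aᵀ ^ ((k : ℕ) - (i + 1))) *ᵥ (Cᵀ *ᵥ fun r => Θ (k, r)) else 0)
          + (if k = ⟨i, hiN⟩ then Cᵀ *ᵥ (fun r => Θ (k, r)) else 0) := by
      intro k
      rcases lt_trichotomy (k : ℕ) i with h | h | h
      · rw [if_neg (by omega), if_neg (by omega), if_neg (by
          intro hk; subst hk; simp at h)]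
        simp
      · rw [if_pos (by omega), if_neg (by omega), if_pos (by
          apply Fin.ext; simpa using h)]
        simp [h]
      · rw [if_pos (by omega), if_pos (by omega), if_neg (by
          intro hk; subst hk; simp at h)]
        have : (k : ℕ) - i = ((k : ℕ) - (i + 1)) + 1 := by omega
        rw [this, pow_succ', mulVec_mulVec]
        simp [Matrix.mul_assoc]
    rw [Finset.sum_congr rfl (fun k _ => key k), Finset.sum_add_distrib,
      ← mulVec_sum', Finset.sum_ite_eq' Finset.univ (⟨i, hiN⟩ : Fin N)]
    simp [add_comm]

/-- **Identity (26): `Σ_{k=0}^{N−1} λ_kᵀ B Q⁻¹ Bᵀ λ_k = Θᵀ F Q_inv Fᵀ Θ`** for the costate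
recursion `λ_N = 0`, `λ_{k−1} = Aᵀλ_k + Cᵀθ_k`. -/
theorem costate_quadratic_form_eq
    (n l m N : ℕ) (hN : 1 ≤ N)
    (A : Matrix (Fin n) (Fin n) ℝ) (B : Matrix (Fin n) (Fin l) ℝ)
    (C : Matrix (Fin m) (Fin n) ℝ) (Q : Matrix (Fin l) (Fin l) ℝ)
    (hQ : IsUnit Q.det)
    (Θ : Fin N × Fin m → ℝ)
    (lam : ℕ → Fin n → ℝ)
    (hlamN : lam N = 0)
    (hlam : ∀ k : Fin N,
      lam (k : ℕ) = Aᵀ *ᵥ lam ((k : ℕ) + 1) + Cᵀ *ᵥ (fun r => Θ (k, r))) :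
    ∑ k ∈ Finset.range N, lam k ⬝ᵥ (B * Q⁻¹ * Bᵀ) *ᵥ lam k
      = Θ ⬝ᵥ (Fmat N A B C * Qinv N Q * (Fmat N A B C)ᵀ) *ᵥ Θ := by
  set u : Fin N × Fin l → ℝ := (Fmat N A B C)ᵀ *ᵥ Θ with hu
  have hlamf := lam_formula A C Θ lam hlamN hlam
  have hBlam : ∀ i : Fin N, (fun s => u (i, s)) = Bᵀ *ᵥ lam (i : ℕ) := by
    intro i
    rw [hlamf (N - (i : ℕ)) (i : ℕ) (by omega), mulVec_sum']
    funext s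
    simp only [Finset.sum_apply]
    rw [hu]
    simp only [mulVec, dotProduct, transpose_apply, Fmat, Fintype.sum_prod_type]
    apply Finset.sum_congr rfl
    intro k _
    by_cases hik : (i : ℕ) ≤ (k : ℕ)
    · simp only [if_pos hik]
      have h3 : Bᵀ *ᵥ (Aᵀ ^ ((k : ℕ) - (i : ℕ)) *ᵥ (Cᵀ *ᵥ fun r => Θ (k, r)))
          = (C * A ^ ((k : ℕ) - (i : ℕ)) * B)ᵀ *ᵥ fun r => Θ (k, r) := by
        rw [mulVec_mulVec, mulVec_mulVec, transpose_mul, transpose_mul, transpose_pow,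
          Matrix.mul_assoc]
      have h2 : ∑ x : Fin n, B x s * (Aᵀ ^ ((k : ℕ) - (i : ℕ)) *ᵥ (Cᵀ *ᵥ fun r => Θ (k, r))) x
          = (Bᵀ *ᵥ (Aᵀ ^ ((k : ℕ) - (i : ℕ)) *ᵥ (Cᵀ *ᵥ fun r => Θ (k, r)))) s := by
        simp [mulVec, dotProduct, transpose_apply]
      rw [h2, h3]
      simp [mulVec, dotProduct, transpose_apply]
    · simp [hik]
  have hrhs : Θ ⬝ᵥ (Fmat N A B C * Qinv N Q * (Fmat N A B C)ᵀ) *ᵥ Θ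
      = ∑ i : Fin N, ∑ s : Fin l, u (i, s) * ∑ t : Fin l, Q⁻¹ s t * u (i, t) := by
    rw [← mulVec_mulVec, ← mulVec_mulVec, dotProduct_mulVec, ← mulVec_transpose, ← hu]
    simp only [dotProduct, mulVec, Qinv, Fintype.sum_prod_type, ite_mul, zero_mul]
    apply Finset.sum_congr rfl
    intro i _
    apply Finset.sum_congr rfl
    intro s _
    congr 1
    rw [Finset.sum_comm]
    simp [Finset.sum_ite_eq]
  rw [hrhs, Finset.sum_range]
  apply Finset.sum_congr rfl
  intro i _
  have h1 : lam (i : ℕ) ⬝ᵥ (B * Q⁻¹ * Bᵀ) *ᵥ lam (i : ℕ)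
      = (Bᵀ *ᵥ lam (i : ℕ)) ⬝ᵥ Q⁻¹ *ᵥ (Bᵀ *ᵥ lam (i : ℕ)) := by
    rw [← mulVec_mulVec, ← mulVec_mulVec, dotProduct_mulVec, ← mulVec_transpose]
  rw [h1, ← hBlam i]
  simp [dotProduct, mulVec, Finset.mul_sum]
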